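/- Assume char k = 3, and let g be the linear map of k⁴ given by g(x₀,x₁,x₂,x₃) = (x₀ + x₁, x₁, x₂ + x₃, x₃) (the block matrix J₂(1) ⊕ J₂(1), which has order 3 in characteristic 3). If F is a nonzero homogeneous polynomial of degree 3 in k[x₀,x₁,x₂,x₃] with F∘g = λ·F for some λ ∈ kˣ, then the cubic surface V(F) is not smooth. (No smooth cubic surface in characteristic 3 is invariant under a projective automorphism of order 3 of this Jordan type.) -/

import Mathlib

open MvPolynomial Matrix

/-- The polynomial `F(A·x)`, obtained from `F` by substituting
`xᵢ ↦ ∑ⱼ Aᵢⱼ xⱼ`. -/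
noncomputable def substMatrix {k : Type*} [Field k] (A : Matrix (Fin 4) (Fin 4) k)
    (F : MvPolynomial (Fin 4) k) : MvPolynomial (Fin 4) k :=
  aeval (fun i => ∑ j, C (A i j) * X j) F

/-- A matrix `A` leaves the cubic surface `V(F)` invariant if `F(A·x) = λ·F(x)`
for some `λ ∈ kˣ`. -/
def LeavesInvariant {k : Type*} [Field k] (A : Matrix (Fin 4) (Fin 4) k)
    (F : MvPolynomial (Fin 4) k) : Prop :=
  ∃ lam : kˣ, substMatrix A F = (lam : k) • F

namespace Stmt7Aux

variable {k : Type*} [Field k]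

lemma coeff_pderiv' (i : Fin 4) (F : MvPolynomial (Fin 4) k) (m : Fin 4 →₀ ℕ) :
    coeff m (pderiv i F) = (m i + 1 : ℕ) * coeff (m + Finsupp.single i 1) F := by
  induction F using MvPolynomial.induction_on' with
  | monomial s a =>
    rw [pderiv_monomial, coeff_monomial, coeff_monomial]
    split_ifs with h1 h2 h2
    · subst h2
      simp only [Finsupp.add_apply, Finsupp.single_eq_same]
      push_cast; ring
    · have hsi : s i = 0 := by
        by_contra hs
        exact h2 (by rw [← h1, tsub_add_cancel_of_le
          (Finsupp.single_le_iff.2 (Nat.one_le_iff_ne_zero.2 hs))])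
      simp [hsi]
    · exact absurd (by rw [h2]; exact add_tsub_cancel_right _ _) h1
    · ring
  | add p q hp hq => simp [hp, hq, mul_add]

lemma pderiv_comm' (i j : Fin 4) (F : MvPolynomial (Fin 4) k) :
    pderiv i (pderiv j F) = pderiv j (pderiv i F) := by
  rcases eq_or_ne i j with rfl | hij
  · rfl
  · ext m
    rw [coeff_pderiv', coeff_pderiv', coeff_pderiv', coeff_pderiv']
    have h1 : ((m + Finsupp.single i 1 : Fin 4 →₀ ℕ)) j = m j := by
      simp [Finsupp.add_apply, Finsupp.single_eq_of_ne' hij]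
    have h2 : ((m + Finsupp.single j 1 : Fin 4 →₀ ℕ)) i = m i := by
      simp [Finsupp.add_apply, Finsupp.single_eq_of_ne' hij.symm]
    rw [h1, h2, add_right_comm]
    push_cast; ring

lemma weight_sum (m : Fin 4 →₀ ℕ) {n : ℕ} {F : MvPolynomial (Fin 4) k}
    (hF : F.IsHomogeneous n) (hm : coeff m F ≠ 0) : m 0 + m 1 + m 2 + m 3 = n := by
  have h := hF hm
  rw [Finsupp.weight_apply, Finsupp.sum_fintype _ _ (by intro i; simp)] at h
  rw [← h]
  simp [Fin.sum_univ_four]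

lemma dvd_of_pderivs [CharP k 3] {P : MvPolynomial (Fin 4) k}
    (h : ∀ i, pderiv i P = 0) {m : Fin 4 →₀ ℕ} (hm : coeff m P ≠ 0) (i : Fin 4) :
    (3:ℕ) ∣ m i := by
  by_cases h0 : m i = 0
  · simp [h0]
  have hle : Finsupp.single i 1 ≤ m := Finsupp.single_le_iff.2 (Nat.one_le_iff_ne_zero.2 h0)
  have hc := congrArg (coeff (m - Finsupp.single i 1)) (h i)
  rw [coeff_pderiv', coeff_zero, tsub_add_cancel_of_le hle] at hc
  have h1 : ((m - Finsupp.single i 1 : Fin 4 →₀ ℕ)) i + 1 = m i := by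
    rw [Finsupp.tsub_apply, Finsupp.single_eq_same]
    omega
  rw [h1] at hc
  rcases mul_eq_zero.mp hc with h2 | h2
  · exact (CharP.cast_eq_zero_iff k 3 (m i)).mp h2
  · exact absurd h2 hm

lemma eq_zero_of_pderivs [CharP k 3] {P : MvPolynomial (Fin 4) k} {n : ℕ}
    (hhom : P.IsHomogeneous n) (hn : ¬ (3 ∣ n)) (h : ∀ i, pderiv i P = 0) : P = 0 := by
  ext m
  rw [coeff_zero]
  by_contra hm
  have hsum := weight_sum m hhom hm
  exact hn (by rw [← hsum]; exact dvd_add (dvd_add (dvd_add (dvd_of_pderivs h hm 0)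
    (dvd_of_pderivs h hm 1)) (dvd_of_pderivs h hm 2)) (dvd_of_pderivs h hm 3))

lemma isHomogeneous_pderiv {n : ℕ} {F : MvPolynomial (Fin 4) k} (hF : F.IsHomogeneous (n+1))
    (i : Fin 4) : (pderiv i F).IsHomogeneous n := by
  intro m hm
  rw [coeff_pderiv'] at hm
  have h2 : coeff (m + Finsupp.single i 1) F ≠ 0 := by
    intro h; rw [h, mul_zero] at hm; exact hm rfl
  have h3 := weight_sum _ hF h2
  rw [Finsupp.weight_apply, Finsupp.sum_fintype _ _ (by intro j; simp)]
  simp only [Fin.sum_univ_four, Pi.one_apply, smul_eq_mul, mul_one]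
  have heq : ∀ j : Fin 4, ((m + Finsupp.single i 1 : Fin 4 →₀ ℕ)) j
      = m j + (Finsupp.single i 1 : Fin 4 →₀ ℕ) j := fun j => rfl
  rw [heq 0, heq 1, heq 2, heq 3] at h3
  have h4 : ((Finsupp.single i 1 : Fin 4 →₀ ℕ)) 0 + ((Finsupp.single i 1 : Fin 4 →₀ ℕ)) 1
      + ((Finsupp.single i 1 : Fin 4 →₀ ℕ)) 2 + ((Finsupp.single i 1 : Fin 4 →₀ ℕ)) 3 = 1 := by
    fin_cases i <;> simp [Finsupp.single_apply]
  omega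

lemma pderiv_aeval (s : Fin 4 → MvPolynomial (Fin 4) k) (i : Fin 4) (F : MvPolynomial (Fin 4) k) :
    pderiv i (aeval s F) = ∑ j, pderiv i (s j) * aeval s (pderiv j F) := by
  induction F using MvPolynomial.induction_on with
  | C a => simp
  | add p q hp hq =>
    simp only [map_add, hp, hq, mul_add, ← Finset.sum_add_distrib]
  | mul_X p n ih =>
    have key : ∀ j : Fin 4, pderiv i (s j) * aeval s (pderiv j (p * X n))
        = pderiv i (s j) * aeval s (pderiv j p) * s n
          + (if n = j then pderiv i (s j) * aeval s p else 0) := by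
      intro j
      rw [pderiv_mul, map_add, _root_.map_mul, _root_.map_mul, aeval_X, pderiv_X]
      rcases eq_or_ne n j with rfl | hnj
      · simp [Pi.single_eq_same]; ring
      · simp [Pi.single_eq_of_ne hnj, if_neg hnj]; ring
    rw [_root_.map_mul, aeval_X, pderiv_mul, ih, Finset.sum_congr rfl (fun j _ => key j),
      Finset.sum_add_distrib, Finset.sum_ite_eq Finset.univ n
        (fun j => pderiv i (s j) * aeval s p), if_pos (Finset.mem_univ n), Finset.sum_mul]
    ring

lemma aeval_comp_apply (s t : Fin 4 → MvPolynomial (Fin 4) k) (G : MvPolynomial (Fin 4) k) :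
    aeval s (aeval t G) = aeval (fun i => aeval s (t i)) G := by
  have h : (aeval s).comp (aeval t) = (aeval (fun i => aeval s (t i)) :
      MvPolynomial (Fin 4) k →ₐ[k] MvPolynomial (Fin 4) k) := by
    apply MvPolynomial.algHom_ext; intro i; simp
  exact congrArg (fun f : MvPolynomial (Fin 4) k →ₐ[k] MvPolynomial (Fin 4) k => f G) h

lemma eval_aeval' (x : Fin 4 → k) (s : Fin 4 → MvPolynomial (Fin 4) k)
    (G : MvPolynomial (Fin 4) k) :
    eval x (aeval s G) = eval (fun i => eval x (s i)) G := by
  have h : (eval x).comp ((aeval s : MvPolynomial (Fin 4) k →ₐ[k] MvPolynomial (Fin 4) k) :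
      MvPolynomial (Fin 4) k →+* MvPolynomial (Fin 4) k)
      = eval (fun i => eval x (s i)) := by
    apply MvPolynomial.ringHom_ext <;> intro i <;> simp
  exact congrArg (fun f : MvPolynomial (Fin 4) k →+* k => f G) h

/-- The substitution for `g`. -/
noncomputable def vg (k : Type*) [Field k] : Fin 4 → MvPolynomial (Fin 4) k :=
  ![X 0 + X 1, X 1, X 2 + X 3, X 3]

/-- The substitution for the projection onto the fixed line `x₁ = x₃ = 0`. -/
noncomputable def vD (k : Type*) [Field k] : Fin 4 → MvPolynomial (Fin 4) k :=
  ![X 0, 0, X 2, 0]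

lemma vg0 : (vg k : Fin 4 → MvPolynomial (Fin 4) k) 0 = X 0 + X 1 := rfl
lemma vg1 : (vg k : Fin 4 → MvPolynomial (Fin 4) k) 1 = X 1 := rfl
lemma vg2 : (vg k : Fin 4 → MvPolynomial (Fin 4) k) 2 = X 2 + X 3 := rfl
lemma vg3 : (vg k : Fin 4 → MvPolynomial (Fin 4) k) 3 = X 3 := rfl
lemma vD0 : (vD k : Fin 4 → MvPolynomial (Fin 4) k) 0 = X 0 := rfl
lemma vD1 : (vD k : Fin 4 → MvPolynomial (Fin 4) k) 1 = 0 := rfl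
lemma vD2 : (vD k : Fin 4 → MvPolynomial (Fin 4) k) 2 = X 2 := rfl
lemma vD3 : (vD k : Fin 4 → MvPolynomial (Fin 4) k) 3 = 0 := rfl

lemma chain_g0 (F : MvPolynomial (Fin 4) k) :
    pderiv 0 (aeval (vg k) F) = aeval (vg k) (pderiv 0 F) := by
  rw [pderiv_aeval, Fin.sum_univ_four, vg0, vg1, vg2, vg3]
  simp

lemma chain_g1 (F : MvPolynomial (Fin 4) k) :
    pderiv 1 (aeval (vg k) F) = aeval (vg k) (pderiv 0 F) + aeval (vg k) (pderiv 1 F) := by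
  rw [pderiv_aeval, Fin.sum_univ_four, vg0, vg1, vg2, vg3]
  simp

lemma chain_g2 (F : MvPolynomial (Fin 4) k) :
    pderiv 2 (aeval (vg k) F) = aeval (vg k) (pderiv 2 F) := by
  rw [pderiv_aeval, Fin.sum_univ_four, vg0, vg1, vg2, vg3]
  simp

lemma chain_g3 (F : MvPolynomial (Fin 4) k) :
    pderiv 3 (aeval (vg k) F) = aeval (vg k) (pderiv 2 F) + aeval (vg k) (pderiv 3 F) := by
  rw [pderiv_aeval, Fin.sum_univ_four, vg0, vg1, vg2, vg3]
  simp

lemma chain_D0 (F : MvPolynomial (Fin 4) k) :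
    pderiv 0 (aeval (vD k) F) = aeval (vD k) (pderiv 0 F) := by
  rw [pderiv_aeval, Fin.sum_univ_four, vD0, vD1, vD2, vD3]
  simp

lemma chain_D1 (F : MvPolynomial (Fin 4) k) :
    pderiv 1 (aeval (vD k) F) = 0 := by
  rw [pderiv_aeval, Fin.sum_univ_four, vD0, vD1, vD2, vD3]
  simp

lemma chain_D2 (F : MvPolynomial (Fin 4) k) :
    pderiv 2 (aeval (vD k) F) = aeval (vD k) (pderiv 2 F) := by
  rw [pderiv_aeval, Fin.sum_univ_four, vD0, vD1, vD2, vD3]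
  simp

lemma chain_D3 (F : MvPolynomial (Fin 4) k) :
    pderiv 3 (aeval (vD k) F) = 0 := by
  rw [pderiv_aeval, Fin.sum_univ_four, vD0, vD1, vD2, vD3]
  simp

lemma comp_Dg (G : MvPolynomial (Fin 4) k) :
    aeval (vD k) (aeval (vg k) G) = aeval (vD k) G := by
  rw [aeval_comp_apply]
  have h : (fun i => aeval (vD k) ((vg k) i)) = vD k := by
    funext i
    fin_cases i <;> simp [vg, vD]
  rw [h]

lemma isHomog_aevalD {n : ℕ} {G : MvPolynomial (Fin 4) k} (hG : G.IsHomogeneous n) :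
    (aeval (vD k) G).IsHomogeneous n := by
  have h := hG.aeval (vD k) (n := 1) (fun i => by
    fin_cases i <;> simp only [vD0, vD1, vD2, vD3] <;>
      first
        | exact isHomogeneous_X _ _
        | exact isHomogeneous_zero _ _ _)
  simpa using h


lemma single_ne_single {i j : Fin 4} (hij : i ≠ j) :
    (Finsupp.single i 3 : Fin 4 →₀ ℕ) ≠ Finsupp.single j 3 := by
  intro h
  have := DFunLike.congr_fun h i
  rw [Finsupp.single_eq_same, Finsupp.single_eq_of_ne' hij.symm] at this
  exact absurd this (by norm_num)

lemma cube_decomp [CharP k 3] {P : MvPolynomial (Fin 4) k} (hP : P.IsHomogeneous 3)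
    (h : ∀ i, pderiv i P = 0) :
    P = C (coeff (Finsupp.single 0 3) P) * X 0 ^ 3 + C (coeff (Finsupp.single 1 3) P) * X 1 ^ 3
      + C (coeff (Finsupp.single 2 3) P) * X 2 ^ 3 + C (coeff (Finsupp.single 3 3) P) * X 3 ^ 3 := by
  ext m
  simp only [coeff_add, coeff_C_mul, X_pow_eq_monomial, coeff_monomial]
  by_cases hsing : ∃ i : Fin 4, m = Finsupp.single i 3
  · obtain ⟨i, rfl⟩ := hsing
    fin_cases i <;>
      simp [single_ne_single, (by decide : (0:Fin 4) ≠ 1), (by decide : (0:Fin 4) ≠ 2),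
        (by decide : (0:Fin 4) ≠ 3), (by decide : (1:Fin 4) ≠ 0), (by decide : (1:Fin 4) ≠ 2),
        (by decide : (1:Fin 4) ≠ 3), (by decide : (2:Fin 4) ≠ 0), (by decide : (2:Fin 4) ≠ 1),
        (by decide : (2:Fin 4) ≠ 3), (by decide : (3:Fin 4) ≠ 0), (by decide : (3:Fin 4) ≠ 1),
        (by decide : (3:Fin 4) ≠ 2)]
  · push_neg at hsing
    have hm : coeff m P = 0 := by
      by_contra hm
      have hd := fun i => dvd_of_pderivs h hm i
      have hs := weight_sum m hP hm
      have hor : (m 0 = 3 ∧ m 1 = 0 ∧ m 2 = 0 ∧ m 3 = 0) ∨ (m 1 = 3 ∧ m 0 = 0 ∧ m 2 = 0 ∧ m 3 = 0)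
          ∨ (m 2 = 3 ∧ m 0 = 0 ∧ m 1 = 0 ∧ m 3 = 0)
          ∨ (m 3 = 3 ∧ m 0 = 0 ∧ m 1 = 0 ∧ m 2 = 0) := by
        have h0 := hd 0; have h1 := hd 1; have h2 := hd 2; have h3 := hd 3
        omega
      have hall : ∀ j : Fin 4, j = 0 ∨ j = 1 ∨ j = 2 ∨ j = 3 := by decide
      have hext : ∀ (i : Fin 4), m i = 3 → (∀ j, j ≠ i → m j = 0) → m = Finsupp.single i 3 := by
        intro i hi hj
        ext j
        rcases eq_or_ne j i with rfl | hji
        · rw [hi, Finsupp.single_eq_same]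
        · rw [hj j hji, Finsupp.single_eq_of_ne' hji.symm]
      rcases hor with ⟨h1,h2,h3,h4⟩ | ⟨h1,h2,h3,h4⟩ | ⟨h1,h2,h3,h4⟩ | ⟨h1,h2,h3,h4⟩
      · exact hsing 0 (hext 0 h1 (fun j hj => by
          rcases hall j with rfl | rfl | rfl | rfl
          · exact absurd rfl hj
          · exact h2
          · exact h3
          · exact h4))
      · exact hsing 1 (hext 1 h1 (fun j hj => by
          rcases hall j with rfl | rfl | rfl | rfl
          · exact h2
          · exact absurd rfl hj
          · exact h3
          · exact h4))
      · exact hsing 2 (hext 2 h1 (fun j hj => by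
          rcases hall j with rfl | rfl | rfl | rfl
          · exact h2
          · exact h3
          · exact absurd rfl hj
          · exact h4))
      · exact hsing 3 (hext 3 h1 (fun j hj => by
          rcases hall j with rfl | rfl | rfl | rfl
          · exact h2
          · exact h3
          · exact h4
          · exact absurd rfl hj))
    rw [hm]
    have hne : ∀ i : Fin 4, (Finsupp.single i 3 : Fin 4 →₀ ℕ) ≠ m := fun i h => hsing i h.symm
    rw [if_neg (hne 0), if_neg (hne 1), if_neg (hne 2), if_neg (hne 3)]
    ring

lemma substMatrix_eq_vg (F : MvPolynomial (Fin 4) k) :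
    substMatrix (!![1, 1, 0, 0; 0, 1, 0, 0; 0, 0, 1, 1; 0, 0, 0, 1] :
      Matrix (Fin 4) (Fin 4) k) F = aeval (vg k) F := by
  unfold substMatrix
  have h : (fun i => ∑ j, C ((!![1, 1, 0, 0; 0, 1, 0, 0; 0, 0, 1, 1; 0, 0, 0, 1] :
      Matrix (Fin 4) (Fin 4) k) i j) * X j) = vg k := by
    funext i
    fin_cases i <;> simp [Fin.sum_univ_four, vg]
  rw [h]

end Stmt7Aux

open Stmt7Aux


/-- In characteristic 3, no smooth cubic surface is invariant
under the projective automorphism of order 3 given by the Jordan type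
`J₂(1) ⊕ J₂(1)`, i.e. `g(x₀,x₁,x₂,x₃) = (x₀+x₁, x₁, x₂+x₃, x₃)`: any cubic
form `F` with `F ∘ g = λ·F` defines a non-smooth surface. -/
theorem stmt7 {k : Type*} [Field k] [IsAlgClosed k] (hchar : ringChar k = 3)
    (F : MvPolynomial (Fin 4) k) (hF0 : F ≠ 0) (hhom : F.IsHomogeneous 3)
    (hinv : ∃ lam : kˣ,
      substMatrix (!![1, 1, 0, 0; 0, 1, 0, 0; 0, 0, 1, 1; 0, 0, 0, 1] :
        Matrix (Fin 4) (Fin 4) k) F = (lam : k) • F) :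
    ¬ (∀ x : Fin 4 → k,
        eval x F = 0 → (∀ i, eval x (pderiv i F) = 0) → x = 0) := by
  haveI hCP : CharP k 3 := hchar ▸ ringChar.charP k
  have h3 : (3 : k) = 0 := CharP.cast_eq_zero k 3
  obtain ⟨lam, heq⟩ := hinv
  rw [substMatrix_eq_vg] at heq
  -- the action on points
  set T : (Fin 4 → k) → (Fin 4 → k) := fun x => ![x 0 + x 1, x 1, x 2 + x 3, x 3] with hT
  have hTeval : ∀ x : Fin 4 → k, ∀ G : MvPolynomial (Fin 4) k,
      eval x (aeval (vg k) G) = eval (T x) G := by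
    intro x G
    rw [eval_aeval']
    have h : (fun i => eval x (vg k i)) = T x := by
      funext i
      fin_cases i <;> simp [vg, hT]
    rw [h]
  -- lam = 1
  have hlam3 : (lam : k) ^ 3 = 1 := by
    obtain ⟨x, hx⟩ : ∃ x, eval x F ≠ 0 := by
      by_contra hc
      push_neg at hc
      exact hF0 (MvPolynomial.funext fun x => by simp [hc x])
    have key : ∀ y : Fin 4 → k, eval (T y) F = (lam : k) * eval y F := by
      intro y
      have := congrArg (eval y) heq
      rw [hTeval, smul_eval] at this
      exact this
    have hTTT : T (T (T x)) = x := by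
      funext i
      fin_cases i <;> simp [hT] <;>
        first
          | rfl
          | linear_combination (x 1) * h3
          | linear_combination (x 3) * h3
    have e1 := key x
    have e2 := key (T x)
    have e3 := key (T (T x))
    rw [hTTT] at e3
    rw [e2, e1] at e3
    have : ((lam : k) ^ 3 - 1) * eval x F = 0 := by linear_combination -e3
    rcases mul_eq_zero.mp this with h | h
    · exact sub_eq_zero.mp h
    · exact absurd h hx
  have hlam1 : (lam : k) = 1 := by
    have hcube : ((lam : k) - 1) ^ 3 = 0 := by
      linear_combination hlam3 + ((lam : k) - (lam : k)^2) * h3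
    have h0 := pow_eq_zero_iff (n := 3) (by norm_num) |>.mp hcube
    exact sub_eq_zero.mp h0
  rw [hlam1, one_smul] at heq
  -- first order relations
  have r0 : aeval (vg k) (pderiv 0 F) = pderiv 0 F := by
    have h := congrArg (pderiv 0) heq
    rwa [chain_g0] at h
  have r2 : aeval (vg k) (pderiv 2 F) = pderiv 2 F := by
    have h := congrArg (pderiv 2) heq
    rwa [chain_g2] at h
  have r1 : aeval (vg k) (pderiv 1 F) = pderiv 1 F - pderiv 0 F := by
    have h := congrArg (pderiv 1) heq
    rw [chain_g1, r0] at h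
    exact eq_sub_of_add_eq' h
  have r3 : aeval (vg k) (pderiv 3 F) = pderiv 3 F - pderiv 2 F := by
    have h := congrArg (pderiv 3) heq
    rw [chain_g3, r2] at h
    exact eq_sub_of_add_eq' h
  -- projections of first derivatives
  have z0 : aeval (vD k) (pderiv 0 F) = 0 := by
    have h := congrArg (aeval (vD k)) r1
    rw [comp_Dg, map_sub] at h
    linear_combination h
  have z2 : aeval (vD k) (pderiv 2 F) = 0 := by
    have h := congrArg (aeval (vD k)) r3
    rw [comp_Dg, map_sub] at h
    linear_combination h
  have h2ne : (2 : k) ≠ 0 := by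
    intro h2
    exact one_ne_zero (by linear_combination h3 - h2 : (1:k) = 0)
  have hall : ∀ j : Fin 4, j = 0 ∨ j = 1 ∨ j = 2 ∨ j = 3 := by decide
  -- second order relations
  have hu01 : aeval (vD k) (pderiv 0 (pderiv 1 F)) = 0 := by
    have h := congrArg (pderiv 1) r1
    rw [chain_g1, map_sub] at h
    have h' := congrArg (aeval (vD k)) h
    rw [map_add, comp_Dg, comp_Dg, map_sub, pderiv_comm' 1 0] at h'
    have h2 : (2:k) • aeval (vD k) (pderiv 0 (pderiv 1 F)) = 0 := by
      rw [two_smul]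
      linear_combination h'
    rcases smul_eq_zero.mp h2 with hh | hh
    · exact absurd hh h2ne
    · exact hh
  have hu23 : aeval (vD k) (pderiv 2 (pderiv 3 F)) = 0 := by
    have h := congrArg (pderiv 3) r3
    rw [chain_g3, map_sub] at h
    have h' := congrArg (aeval (vD k)) h
    rw [map_add, comp_Dg, comp_Dg, map_sub, pderiv_comm' 3 2] at h'
    have h2 : (2:k) • aeval (vD k) (pderiv 2 (pderiv 3 F)) = 0 := by
      rw [two_smul]
      linear_combination h'
    rcases smul_eq_zero.mp h2 with hh | hh
    · exact absurd hh h2ne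
    · exact hh
  have huv : aeval (vD k) (pderiv 2 (pderiv 1 F)) = - aeval (vD k) (pderiv 0 (pderiv 3 F)) := by
    have h := congrArg (pderiv 3) r1
    rw [chain_g3, map_sub] at h
    have h' := congrArg (aeval (vD k)) h
    rw [map_add, comp_Dg, comp_Dg, map_sub, pderiv_comm' 3 0] at h'
    linear_combination h'
  -- the restricted partial derivatives
  have hA'0 : pderiv 0 (aeval (vD k) (pderiv 1 F)) = 0 := by rw [chain_D0, hu01]
  have hB'2 : pderiv 2 (aeval (vD k) (pderiv 3 F)) = 0 := by rw [chain_D2, hu23]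
  -- u := pderiv 2 A'
  have hupd : ∀ i, pderiv i (pderiv 2 (aeval (vD k) (pderiv 1 F))) = 0 := by
    have hu2v : pderiv 2 (aeval (vD k) (pderiv 1 F))
        = - pderiv 0 (aeval (vD k) (pderiv 3 F)) := by
      rw [chain_D2, chain_D0, huv]
    intro i
    rcases hall i with rfl | rfl | rfl | rfl
    · rw [pderiv_comm' 0 2, hA'0]
      simp
    · rw [chain_D2, chain_D1]
    · rw [hu2v, map_neg, pderiv_comm' 2 0, hB'2]
      simp
    · rw [chain_D2, chain_D3]
  have huhom : (pderiv 2 (aeval (vD k) (pderiv 1 F))).IsHomogeneous 1 := by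
    rw [chain_D2]
    exact isHomog_aevalD (isHomogeneous_pderiv (isHomogeneous_pderiv hhom 1) 2)
  have hu0 : pderiv 2 (aeval (vD k) (pderiv 1 F)) = 0 :=
    eq_zero_of_pderivs huhom (by norm_num) hupd
  -- A' = 0 and B' = 0
  have hA' : aeval (vD k) (pderiv 1 F) = 0 := by
    refine eq_zero_of_pderivs (isHomog_aevalD (isHomogeneous_pderiv hhom 1)) (by norm_num) ?_
    intro i
    rcases hall i with rfl | rfl | rfl | rfl
    · exact hA'0
    · exact chain_D1 _
    · exact hu0
    · exact chain_D3 _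
  have hB' : aeval (vD k) (pderiv 3 F) = 0 := by
    have hv0 : pderiv 0 (aeval (vD k) (pderiv 3 F)) = 0 := by
      have hthis := hu0
      rw [chain_D2, huv, ← chain_D0, neg_eq_zero] at hthis
      exact hthis
    refine eq_zero_of_pderivs (isHomog_aevalD (isHomogeneous_pderiv hhom 3)) (by norm_num) ?_
    intro i
    rcases hall i with rfl | rfl | rfl | rfl
    · exact hv0
    · exact chain_D1 _
    · exact hB'2
    · exact chain_D3 _
  -- the restriction of F to the fixed line
  have hf'pd : ∀ i, pderiv i (aeval (vD k) F) = 0 := by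
    intro i
    rcases hall i with rfl | rfl | rfl | rfl
    · rw [chain_D0, z0]
    · exact chain_D1 _
    · rw [chain_D2, z2]
    · exact chain_D3 _
  have hdec := cube_decomp (isHomog_aevalD hhom) hf'pd
  -- choose a zero on the fixed line
  obtain ⟨s, hs⟩ := IsAlgClosed.exists_pow_nat_eq
    (coeff (Finsupp.single 2 3) (aeval (vD k) F)) (n := 3) (by norm_num)
  obtain ⟨t, ht⟩ := IsAlgClosed.exists_pow_nat_eq
    (-(coeff (Finsupp.single 0 3) (aeval (vD k) F))) (n := 3) (by norm_num)
  obtain ⟨a, b, hab, hzero⟩ : ∃ a b : k, (a ≠ 0 ∨ b ≠ 0) ∧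
      coeff (Finsupp.single 0 3) (aeval (vD k) F) * a^3
        + coeff (Finsupp.single 2 3) (aeval (vD k) F) * b^3 = 0 := by
    by_cases hst : s = 0 ∧ t = 0
    · refine ⟨1, 0, Or.inl one_ne_zero, ?_⟩
      have hc0 : coeff (Finsupp.single 0 3) (aeval (vD k) F) = 0 := by
        have h := ht
        rw [hst.2] at h
        have h0 : (0:k) = -(coeff (Finsupp.single 0 3) (aeval (vD k) F)) := by
          simpa using h
        linear_combination h0
      rw [hc0]
      ring
    · refine ⟨s, t, by tauto, ?_⟩
      linear_combination coeff (Finsupp.single 0 3) (aeval (vD k) F) * hs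
        + coeff (Finsupp.single 2 3) (aeval (vD k) F) * ht
  intro hsmooth
  set p : Fin 4 → k := ![a, 0, b, 0] with hp
  have hevalD : ∀ G, eval p (aeval (vD k) G) = eval p G := by
    intro G
    rw [eval_aeval']
    have hproj : (fun i => eval p (vD k i)) = p := by
      funext i
      fin_cases i <;> simp [vD, hp]
    rw [hproj]
  have hFp : eval p F = 0 := by
    rw [← hevalD F, hdec]
    simp only [map_add, _root_.map_mul, eval_C, map_pow, eval_X]
    have hp0 : p 0 = a := by simp [hp]
    have hp1 : p 1 = 0 := by simp [hp]
    have hp2 : p 2 = b := by simp [hp]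
    have hp3 : p 3 = 0 := by simp [hp]
    rw [hp0, hp1, hp2, hp3]
    linear_combination hzero
  have hderiv : ∀ i, eval p (pderiv i F) = 0 := by
    intro i
    rcases hall i with rfl | rfl | rfl | rfl
    · rw [← hevalD, z0, map_zero]
    · rw [← hevalD, hA', map_zero]
    · rw [← hevalD, z2, map_zero]
    · rw [← hevalD, hB', map_zero]
  have hzero' := hsmooth p hFp hderiv
  rcases hab with ha | hb
  · exact ha (by have h := congrFun hzero' 0; simpa [hp] using h)
  · exact hb (by have h := congrFun hzero' 2; simpa [hp] using h)
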